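/- Define on the space V^{(ℓ)} = span{1, η, …, η^{2ℓ}} of polynomials of degree ≤ 2ℓ the operators S^α = a_α(((e_α-e_β)(e_α-e_γ) - (η-e_α)²)d/dη + 2ℓ(η-e_α)) for (α,β,γ) a cyclic permutation of (1,2,3), with a₁ = 1/(√(e₁-e₂)√(e₁-e₃)), a₂ = i/(√(e₁-e₂)√(e₂-e₃)), a₃ = 1/(√(e₂-e₃)√(e₁-e₃)), where e₁+e₂+e₃ = 0. Then [S^a, S^b] = 2i S^c for every cyclic permutation (a,b,c) of (1,2,3); in particular these operators define a representation of sl₂(ℂ). -/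

import Mathlib

open Complex Polynomial

/-- The operator `S^α = a_α(((e_α-e_β)(e_α-e_γ) - (η-e_α)²) d/dη + 2ℓ(η-e_α))`
on polynomials in `η`, where `n = 2ℓ`. -/
noncomputable def Sop (a eα eβ eγ : ℂ) (n : ℕ) (f : Polynomial ℂ) : Polynomial ℂ :=
  a • ((Polynomial.C ((eα - eβ) * (eα - eγ)) - (Polynomial.X - Polynomial.C eα) ^ 2) *
        Polynomial.derivative f +
      (n : ℂ) • ((Polynomial.X - Polynomial.C eα) * f))

lemma Sop_key (a b u v w : ℂ) (hsum : u + v + w = 0) (n : ℕ) (f : Polynomial ℂ) :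
    Sop a u v w n (Sop b v w u n f) - Sop b v w u n (Sop a u v w n f)
      = (2 * (a * b * (u - v))) • Sop 1 w u v n f := by
  have hw : w = -u - v := by linear_combination hsum
  subst hw
  simp only [Sop, smul_eq_C_mul, map_mul, map_sub, map_add, map_neg, map_one,
    derivative_mul, derivative_add, derivative_sub, derivative_pow, derivative_X,
    derivative_C, Polynomial.derivative_natCast, map_natCast, map_ofNat]
  ring

lemma Sop_smul (a u v w : ℂ) (n : ℕ) (f : Polynomial ℂ) :
    Sop a u v w n f = a • Sop 1 u v w n f := by
  simp [Sop, smul_smul]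


/-- The operators `S¹, S², S³` of the elliptic realization of the spin-ℓ
representation satisfy `[S^a, S^b] = 2i S^c` for every cyclic permutation
`(a,b,c)` of `(1,2,3)`; in particular they define a representation of `sl₂(ℂ)`. -/
theorem Sop_sl2_relations (e1 e2 e3 s12 s13 s23 : ℂ)
    (h12 : e1 ≠ e2) (h13 : e1 ≠ e3) (h23 : e2 ≠ e3)
    (hsum : e1 + e2 + e3 = 0)
    (hs12 : s12 ^ 2 = e1 - e2) (hs13 : s13 ^ 2 = e1 - e3) (hs23 : s23 ^ 2 = e2 - e3)
    (n : ℕ)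
    (S1 S2 S3 : Polynomial ℂ → Polynomial ℂ)
    (hS1 : S1 = Sop (1 / (s12 * s13)) e1 e2 e3 n)
    (hS2 : S2 = Sop (Complex.I / (s12 * s23)) e2 e3 e1 n)
    (hS3 : S3 = Sop (1 / (s23 * s13)) e3 e1 e2 n) :
    (∀ f : Polynomial ℂ, S1 (S2 f) - S2 (S1 f) = (2 * Complex.I) • S3 f) ∧
    (∀ f : Polynomial ℂ, S2 (S3 f) - S3 (S2 f) = (2 * Complex.I) • S1 f) ∧
    (∀ f : Polynomial ℂ, S3 (S1 f) - S1 (S3 f) = (2 * Complex.I) • S2 f) := by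
  have hns12 : s12 ≠ 0 := by
    intro h; apply h12; have := hs12; rw [h] at this; simpa [sub_eq_zero, eq_comm] using this.symm
  have hns13 : s13 ≠ 0 := by
    intro h; apply h13; have := hs13; rw [h] at this; simpa [sub_eq_zero, eq_comm] using this.symm
  have hns23 : s23 ≠ 0 := by
    intro h; apply h23; have := hs23; rw [h] at this; simpa [sub_eq_zero, eq_comm] using this.symm
  subst hS1 hS2 hS3
  refine ⟨fun f => ?_, fun f => ?_, fun f => ?_⟩
  · rw [Sop_key _ _ _ _ _ hsum, Sop_smul (1 / (s23 * s13)), smul_smul]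
    congr 1
    rw [← hs12]; field_simp
  · rw [Sop_key _ _ _ _ _ (by linear_combination hsum), Sop_smul (1 / (s12 * s13)), smul_smul]
    congr 1
    rw [← hs23]; field_simp
  · rw [Sop_key _ _ _ _ _ (by linear_combination hsum), Sop_smul (Complex.I / (s12 * s23)), smul_smul]
    congr 1
    have h : e3 - e1 = -s13 ^ 2 := by linear_combination hs13
    rw [h]; field_simp
    linear_combination (-1 : ℂ) * Complex.I_sq
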